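/- With the same definitions, the second-upper-diagonal equation of AA^{-1}=I holds: r_n σ_n + p_{n+1}π_{n+2} + q_n ρ_{n+2} = 0 for all n ∈ ℤ (appropriately indexed so the even and odd cases both hold). -/
import Mathlib


theorem smp_inverse_second_diagonal_equation
    (p q r ρ π σ D : ℤ → ℝ)
    (hre : ∀ n : ℤ, r (2 * n) = 0) (hro : ∀ n : ℤ, 0 < r (2 * n + 1))
    (hq : ∀ n : ℤ, q (2 * n) = p (2 * n) * p (2 * n + 1) / r (2 * n + 1))
    (hD : ∀ n : ℤ, D n = q (2 * n - 1) * p (2 * n - 2) * p (2 * n + 1)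
      - p (2 * n - 2) * p (2 * n) * r (2 * n + 1)
      - p (2 * n - 1) * p (2 * n + 1) * r (2 * n - 1))
    (hDne : ∀ n : ℤ, D n ≠ 0)
    (hp2 : ∀ n : ℤ, p (2 * n) ^ 2 + p (2 * n + 1) ^ 2 ≠ 0)
    (hρo : ∀ n : ℤ, ρ (2 * n + 1) = 0)
    (hρe : ∀ n : ℤ, ρ (2 * n) = r (2 * n - 1) * r (2 * n + 1) / D n)
    (hπo : ∀ n : ℤ, π (2 * n + 1) = -(p (2 * n + 3) * ρ (2 * n + 2)) / r (2 * n + 3))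
    (hπe : ∀ n : ℤ, π (2 * n) = -(p (2 * n - 2) * ρ (2 * n)) / r (2 * n - 1))
    (hσo : ∀ n : ℤ, σ (2 * n + 1) =
      p (2 * n) * p (2 * n + 3) * ρ (2 * n + 2) / (r (2 * n + 1) * r (2 * n + 3)))
    (hσe : ∀ n : ℤ, σ (2 * n) =
      -(p (2 * n) * (π (2 * n + 1) * r (2 * n + 1) + q (2 * n - 1) * π (2 * n)
          + p (2 * n - 1) * ρ (2 * n))
        + p (2 * n + 1) * (π (2 * n) * r (2 * n + 1) + q (2 * n + 1) * π (2 * n + 1)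
          + p (2 * n + 2) * ρ (2 * n + 2))) / (p (2 * n) ^ 2 + p (2 * n + 1) ^ 2)) :
    ∀ n : ℤ, r (n + 2) * σ (n + 2) + p (n + 1) * π (n + 2) + q n * ρ (n + 2) = 0 := by
  intro n
  obtain ⟨m, rfl | rfl⟩ := Int.even_or_odd' n
  · -- n = 2m even
    have hr0 : r (2 * m + 2) = 0 := by
      have := hre (m + 1); rw [show (2 * (m + 1) : ℤ) = 2 * m + 2 by ring] at this; exact this
    have hπ : π (2 * m + 2) = -(p (2 * m) * ρ (2 * m + 2)) / r (2 * m + 1) := by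
      have := hπe (m + 1)
      simp only [show (2 * (m + 1) : ℤ) = 2 * m + 2 by ring,
        show (2 * m + 2 - 2 : ℤ) = 2 * m by ring,
        show (2 * m + 2 - 1 : ℤ) = 2 * m + 1 by ring] at this
      exact this
    have hrne : r (2 * m + 1) ≠ 0 := ne_of_gt (hro m)
    rw [hr0, hπ, hq m]
    field_simp
    ring
  · -- n = 2m+1 odd
    have hρ0 : ρ (2 * m + 1 + 2) = 0 := by
      have := hρo (m + 1); rw [show (2 * (m + 1) + 1 : ℤ) = 2 * m + 1 + 2 by ring] at this
      exact this
    have hσ : σ (2 * m + 1 + 2) =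
        p (2 * m + 2) * p (2 * m + 5) * ρ (2 * m + 4) / (r (2 * m + 3) * r (2 * m + 5)) := by
      have := hσo (m + 1)
      simp only [show (2 * (m + 1) + 1 : ℤ) = 2 * m + 1 + 2 by ring,
        show (2 * (m + 1) : ℤ) = 2 * m + 2 by ring,
        show (2 * m + 2 + 3 : ℤ) = 2 * m + 5 by ring,
        show (2 * m + 2 + 2 : ℤ) = 2 * m + 4 by ring,
        show (2 * m + 2 + 1 : ℤ) = 2 * m + 3 by ring] at this
      rw [show (2 * m + 1 + 2 : ℤ) = 2 * m + 3 by ring]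
      exact this
    have hπ : π (2 * m + 1 + 2) = -(p (2 * m + 5) * ρ (2 * m + 4)) / r (2 * m + 5) := by
      have := hπo (m + 1)
      simp only [show (2 * (m + 1) + 1 : ℤ) = 2 * m + 1 + 2 by ring,
        show (2 * (m + 1) + 3 : ℤ) = 2 * m + 5 by ring,
        show (2 * (m + 1) + 2 : ℤ) = 2 * m + 4 by ring] at this
      exact this
    have hr3 : r (2 * m + 3) ≠ 0 := by
      have := hro (m + 1); rw [show (2 * (m + 1) + 1 : ℤ) = 2 * m + 3 by ring] at this
      exact ne_of_gt this
    have hr5 : r (2 * m + 5) ≠ 0 := by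
      have := hro (m + 2); rw [show (2 * (m + 2) + 1 : ℤ) = 2 * m + 5 by ring] at this
      exact ne_of_gt this
    rw [hρ0, hσ, hπ]
    rw [show (2 * m + 1 + 1 : ℤ) = 2 * m + 2 by ring, show (2 * m + 1 + 2 : ℤ) = 2 * m + 3 by ring]
    field_simp
    ring
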